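/- Let M ∈ ℝ^{n×n} be symmetric positive definite, A ∈ ℝ^{n×n} arbitrary, let B ∈ ℝ^{m×n} have full row rank m with 1 ≤ m ≤ n, and set ℰ := [[(1/τ)M, 0], [0, 0]] and 𝒜 := [[(1/τ)M + A, Bᵀ], [B, 0]], both in ℝ^{(n+m)×(n+m)}. Then there exists τ₀ > 0 such that for all τ with 0 < τ < τ₀ there exist invertible matrices P, Q ∈ ℝ^{(n+m)×(n+m)}, a matrix J ∈ ℝ^{(n−m)×(n−m)}, and a matrix N ∈ ℝ^{2m×2m} with N² = 0 and N ≠ 0, such that P ℰ Q = [[I_{n−m}, 0], [0, N]] and P 𝒜 Q = [[J, 0], [0, I_{2m}]]. In other words, the implicit-explicit Euler difference-algebraic equation for the semi-discrete Navier–Stokes equations has Kronecker index 2. -/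

import Mathlib

open Matrix

namespace ImexKroneckerAux

/-- A square (or rectangular) matrix with trivial `mulVec` kernel has injective `mulVec`. -/
lemma mulVec_inj_of_ker {ι κ : Type*} [Fintype κ] (X : Matrix ι κ ℝ)
    (h : ∀ v : κ → ℝ, X *ᵥ v = 0 → v = 0) : Function.Injective X.mulVec := by
  intro a b hab
  have h1 : X *ᵥ (a - b) = 0 := by rw [Matrix.mulVec_sub, hab, sub_self]
  have := h _ h1
  exact sub_eq_zero.mp this

/-- `B W Bᵀ` has trivial kernel when `W` is positive definite and `Bᵀ` has trivial kernel. -/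
lemma bwb_ker {n m : ℕ} (B : Matrix (Fin m) (Fin n) ℝ) (W : Matrix (Fin n) (Fin n) ℝ)
    (hW : W.PosDef) (hBt : ∀ p : Fin m → ℝ, Bᵀ *ᵥ p = 0 → p = 0) :
    ∀ p : Fin m → ℝ, (B * (W * Bᵀ)) *ᵥ p = 0 → p = 0 := by
  intro p hp
  by_cases hz : Bᵀ *ᵥ p = 0
  · exact hBt p hz
  · exfalso
    have hpos := hW.dotProduct_mulVec_pos hz
    rw [star_trivial] at hpos
    have key : p ⬝ᵥ ((B * (W * Bᵀ)) *ᵥ p) = (Bᵀ *ᵥ p) ⬝ᵥ (W *ᵥ (Bᵀ *ᵥ p)) := by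
      rw [← Matrix.mulVec_mulVec, ← Matrix.mulVec_mulVec, Matrix.dotProduct_mulVec,
        Matrix.mulVec_transpose]
    rw [hp, dotProduct_zero] at key
    rw [← key] at hpos
    exact lt_irrefl 0 hpos

lemma mul_submatrix_right {ι κ σ σ' : Type*} [Fintype κ]
    (M : Matrix ι κ ℝ) (N : Matrix κ σ ℝ) (g : σ' → σ) :
    M * N.submatrix id g = (M * N).submatrix id g := by
  ext i j
  simp [Matrix.mul_apply]

lemma fromColumns_add {ι κ₁ κ₂ : Type*} (A₁ B₁ : Matrix ι κ₁ ℝ) (A₂ B₂ : Matrix ι κ₂ ℝ) :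
    fromCols A₁ A₂ + fromCols B₁ B₂ = fromCols (A₁ + B₁) (A₂ + B₂) := by
  ext i (j | j) <;> simp [Matrix.fromCols]

lemma fromColumns_zero {ι κ₁ κ₂ : Type*} :
    (fromCols (0 : Matrix ι κ₁ ℝ) (0 : Matrix ι κ₂ ℝ)) = 0 := by
  ext i (j | j) <;> simp [Matrix.fromCols]

/-- The key algebraic construction: Kronecker canonical form of index 2 for the pair
`(fromBlocks K 0 0 0, fromBlocks (K+A) Bᵀ B 0)` assuming invertibility of `K + A` and the
Schur complement. -/
theorem aux (n m k : ℕ) (hm : 1 ≤ m) (hk : k + m = n)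
    (K A : Matrix (Fin n) (Fin n) ℝ) (B : Matrix (Fin m) (Fin n) ℝ)
    (hK : K.PosDef) (hBt : ∀ p : Fin m → ℝ, Bᵀ *ᵥ p = 0 → p = 0)
    (hrank : B.rank = m)
    (hFu : IsUnit (K + A)) (hSu : IsUnit (B * ((K + A)⁻¹ * Bᵀ))) :
    ∃ (e : (Fin n ⊕ Fin m) ≃ (Fin k ⊕ Fin (2 * m)))
      (P Q : Matrix (Fin k ⊕ Fin (2 * m)) (Fin k ⊕ Fin (2 * m)) ℝ)
      (J : Matrix (Fin k) (Fin k) ℝ) (N : Matrix (Fin (2 * m)) (Fin (2 * m)) ℝ),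
      IsUnit P ∧ IsUnit Q ∧ N ^ 2 = 0 ∧ N ≠ 0 ∧
      P * ((fromBlocks K 0 0 (0 : Matrix (Fin m) (Fin m) ℝ)).submatrix e.symm e.symm) * Q
        = fromBlocks 1 0 0 N ∧
      P * ((fromBlocks (K + A) Bᵀ B 0).submatrix e.symm e.symm) * Q
        = fromBlocks J 0 0 1 := by
  classical
  have hFd : IsUnit (K + A).det := (Matrix.isUnit_iff_isUnit_det _).mp hFu
  set F : Matrix (Fin n) (Fin n) ℝ := K + A with hFdef
  have hF1 : F * F⁻¹ = 1 := Matrix.mul_nonsing_inv F hFd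
  have hF2 : F⁻¹ * F = 1 := Matrix.nonsing_inv_mul F hFd
  set S : Matrix (Fin m) (Fin m) ℝ := B * (F⁻¹ * Bᵀ) with hSdef
  have hSd : IsUnit S.det := (Matrix.isUnit_iff_isUnit_det _).mp hSu
  have hS1 : S * S⁻¹ = 1 := Matrix.mul_nonsing_inv S hSd
  have hKu : IsUnit K :=
    (Matrix.isUnit_iff_isUnit_det _).mpr (isUnit_iff_ne_zero.mpr hK.det_pos.ne')
  have hKd : IsUnit K.det := (Matrix.isUnit_iff_isUnit_det _).mp hKu
  have hK1 : K * K⁻¹ = 1 := Matrix.mul_nonsing_inv K hKd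
  have hK2 : K⁻¹ * K = 1 := Matrix.nonsing_inv_mul K hKd
  -- cancellation helpers
  have cF : ∀ {p : Type} (X : Matrix (Fin n) p ℝ), F * (F⁻¹ * X) = X := by
    intro p X; rw [← Matrix.mul_assoc, hF1, Matrix.one_mul]
  have cK : ∀ {p : Type} (X : Matrix (Fin n) p ℝ), K * (K⁻¹ * X) = X := by
    intro p X; rw [← Matrix.mul_assoc, hK1, Matrix.one_mul]
  have cS : ∀ {p : Type} (X : Matrix (Fin m) p ℝ), S * (S⁻¹ * X) = X := by
    intro p X; rw [← Matrix.mul_assoc, hS1, Matrix.one_mul]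
  -- the matrices G₁, G₂ solving 𝒜 (G₁; G₂) = (K; 0)
  set G₂ : Matrix (Fin m) (Fin n) ℝ := S⁻¹ * (B * (F⁻¹ * K)) with hG₂def
  set G₁ : Matrix (Fin n) (Fin n) ℝ := F⁻¹ * K - F⁻¹ * (Bᵀ * G₂) with hG₁def
  have hFG : F * G₁ + Bᵀ * G₂ = K := by
    rw [hG₁def, Matrix.mul_sub, cF, cF, sub_add_cancel]
  have hBG1 : B * G₁ = 0 := by
    have h1 : B * (F⁻¹ * (Bᵀ * G₂)) = S * G₂ := by
      rw [hSdef, Matrix.mul_assoc, ← Matrix.mul_assoc F⁻¹ Bᵀ G₂]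
    rw [hG₁def, Matrix.mul_sub, h1, hG₂def, cS, sub_self]
  -- trivial kernel of B * (K⁻¹ * Bᵀ)
  have hBKB : ∀ p : Fin m → ℝ, (B * (K⁻¹ * Bᵀ)) *ᵥ p = 0 → p = 0 :=
    bwb_ker B K⁻¹ hK.inv hBt
  -- kernel lemma : ker G₁ ∩ ker B = 0
  have hL : ∀ x : Fin n → ℝ, B *ᵥ x = 0 → G₁ *ᵥ x = 0 → x = 0 := by
    intro x hBx hGx
    have hKx : K *ᵥ x = Bᵀ *ᵥ (G₂ *ᵥ x) := by
      have h1 : (F * G₁ + Bᵀ * G₂) *ᵥ x = K *ᵥ x := by rw [hFG]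
      rw [Matrix.add_mulVec, ← Matrix.mulVec_mulVec, ← Matrix.mulVec_mulVec, hGx,
        Matrix.mulVec_zero, zero_add] at h1
      exact h1.symm
    have hx : x = (K⁻¹ * Bᵀ) *ᵥ (G₂ *ᵥ x) := by
      have h2 : K⁻¹ *ᵥ (K *ᵥ x) = x := by
        rw [Matrix.mulVec_mulVec, hK2, Matrix.one_mulVec]
      conv_lhs => rw [← h2, hKx]
      rw [Matrix.mulVec_mulVec]
    have hp : (B * (K⁻¹ * Bᵀ)) *ᵥ (G₂ *ᵥ x) = 0 := by
      rw [← Matrix.mulVec_mulVec, ← hx, hBx]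
    have hp0 : G₂ *ᵥ x = 0 := hBKB _ hp
    have hx0 : K *ᵥ x = 0 := by rw [hKx, hp0, Matrix.mulVec_zero]
    have := congrArg (fun y => K⁻¹ *ᵥ y) hx0
    simpa [Matrix.mulVec_mulVec, hK2, Matrix.one_mulVec] using this
  -- basis of ker B
  have hfin : Module.finrank ℝ (LinearMap.ker B.mulVecLin) = k := by
    have h1 := LinearMap.finrank_range_add_finrank_ker B.mulVecLin
    have h2 : Module.finrank ℝ (LinearMap.range B.mulVecLin) = m := hrank
    rw [h2, Module.finrank_fintype_fun_eq_card, Fintype.card_fin] at h1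
    omega
  let bV : Module.Basis (Fin k) ℝ (LinearMap.ker B.mulVecLin) :=
    Module.finBasisOfFinrankEq ℝ _ hfin
  set V : Matrix (Fin n) (Fin k) ℝ := Matrix.of fun i j => ((bV j : Fin n → ℝ) i) with hVdef
  have hmemV : ∀ j, B *ᵥ ((bV j : Fin n → ℝ)) = 0 := by
    intro j
    have h3 : B.mulVecLin ((bV j : Fin n → ℝ)) = 0 := LinearMap.map_coe_ker _ (bV j)
    rw [Matrix.mulVecLin_apply] at h3
    exact h3
  have hBV : B * V = 0 := by
    ext i j
    have h3 := congrFun (hmemV j) i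
    simp only [Matrix.mulVec, dotProduct, Pi.zero_apply] at h3
    simpa [Matrix.mul_apply, hVdef] using h3
  have hVmul : ∀ a : Fin k → ℝ,
      V *ᵥ a = (((∑ j, a j • bV j : LinearMap.ker B.mulVecLin)) : Fin n → ℝ) := by
    intro a
    ext i
    simp [Matrix.mulVec, dotProduct, hVdef, Finset.sum_apply, mul_comm]
  have hVinj : ∀ a : Fin k → ℝ, V *ᵥ a = 0 → a = 0 := by
    intro a ha
    have h0 : (∑ j, a j • bV j) = (0 : LinearMap.ker B.mulVecLin) := by
      apply Subtype.ext
      rw [← hVmul a, ha]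
      rfl
    have hli := Fintype.linearIndependent_iff.mp bV.linearIndependent a h0
    funext i
    exact hli i
  -- columns of G₁ * V lie in ker B
  have hBG1V : B * (G₁ * V) = 0 := by
    rw [← Matrix.mul_assoc, hBG1, Matrix.zero_mul]
  have hcol : ∀ j : Fin k, B.mulVecLin (fun r => (G₁ * V) r j) = 0 := by
    intro j
    ext i
    have := congrFun (congrFun hBG1V i) j
    simpa [Matrix.mulVecLin_apply, Matrix.mulVec, dotProduct, Matrix.mul_apply] using this
  let colK : Fin k → LinearMap.ker B.mulVecLin := fun j =>
    ⟨fun r => (G₁ * V) r j, LinearMap.mem_ker.mpr (hcol j)⟩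
  set C : Matrix (Fin k) (Fin k) ℝ := Matrix.of fun i j => bV.repr (colK j) i with hCdef
  have hVC : V * C = G₁ * V := by
    ext i j
    have hrep := bV.sum_repr (colK j)
    have := congrFun (congrArg (Subtype.val) hrep) i
    simp only [Submodule.coe_sum, Submodule.coe_smul, Finset.sum_apply, Pi.smul_apply,
      smul_eq_mul] at this
    rw [Matrix.mul_apply]
    exact (Finset.sum_congr rfl fun x _ => mul_comm _ _).trans this
  -- C is invertible
  have hCker : ∀ a : Fin k → ℝ, C *ᵥ a = 0 → a = 0 := by
    intro a ha
    have h1 : V *ᵥ (C *ᵥ a) = 0 := by rw [ha, Matrix.mulVec_zero]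
    rw [Matrix.mulVec_mulVec, hVC, ← Matrix.mulVec_mulVec] at h1
    have h2 : B *ᵥ (V *ᵥ a) = 0 := by
      rw [Matrix.mulVec_mulVec, hBV, Matrix.zero_mulVec]
    exact hVinj a (hL _ h2 h1)
  have hCu : IsUnit C := Matrix.mulVec_injective_iff_isUnit.mp (mulVec_inj_of_ker C hCker)
  have hCd : IsUnit C.det := (Matrix.isUnit_iff_isUnit_det _).mp hCu
  have hC1 : C * C⁻¹ = 1 := Matrix.mul_nonsing_inv C hCd
  have hC2 : C⁻¹ * C = 1 := Matrix.nonsing_inv_mul C hCd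
  -- block matrices
  set N₂ : Matrix (Fin m ⊕ Fin m) (Fin m ⊕ Fin m) ℝ := fromBlocks 0 0 1 0 with hN₂def
  set X₂ : Matrix (Fin n) (Fin m ⊕ Fin m) ℝ := fromCols (K⁻¹ * Bᵀ) 0 with hX₂def
  set X₄ : Matrix (Fin m) (Fin m ⊕ Fin m) ℝ := fromCols 0 1 with hX₄def
  set Q₁ : Matrix (Fin n ⊕ Fin m) (Fin k ⊕ (Fin m ⊕ Fin m)) ℝ :=
    fromBlocks (G₁ * V) X₂ (G₂ * V) X₄ with hQ₁def
  set D : Matrix (Fin k ⊕ (Fin m ⊕ Fin m)) (Fin k ⊕ (Fin m ⊕ Fin m)) ℝ :=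
    fromBlocks C 0 0 N₂ with hDdef
  -- computation of 𝒜 * Q₁
  have hTL : F * (G₁ * V) + Bᵀ * (G₂ * V) = K * V := by
    rw [← Matrix.mul_assoc, ← Matrix.mul_assoc, ← Matrix.add_mul, hFG]
  have hTR : F * X₂ + Bᵀ * X₄ = fromCols (F * (K⁻¹ * Bᵀ)) Bᵀ := by
    rw [hX₂def, hX₄def, Matrix.mul_fromCols, Matrix.mul_fromCols, Matrix.mul_zero,
      Matrix.mul_zero, Matrix.mul_one, fromColumns_add, add_zero, zero_add]
  have hBL : B * (G₁ * V) + (0 : Matrix (Fin m) (Fin m) ℝ) * (G₂ * V)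
      = (0 : Matrix (Fin m) (Fin k) ℝ) := by
    rw [hBG1V, Matrix.zero_mul, add_zero]
  have hBR : B * X₂ + (0 : Matrix (Fin m) (Fin m) ℝ) * X₄
      = fromCols (B * (K⁻¹ * Bᵀ)) 0 := by
    rw [hX₂def, Matrix.mul_fromCols, Matrix.mul_zero, Matrix.zero_mul, add_zero]
  have hAQ : fromBlocks F Bᵀ B 0 * Q₁
      = fromBlocks (K * V) (fromCols (F * (K⁻¹ * Bᵀ)) Bᵀ) 0
          (fromCols (B * (K⁻¹ * Bᵀ)) 0) := by
    rw [hQ₁def, Matrix.fromBlocks_multiply, hTL, hTR, hBL, hBR]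
  -- key identity : ℰ Q₁ = 𝒜 Q₁ D
  have hKVC : (K * V) * C = K * (G₁ * V) := by
    rw [Matrix.mul_assoc, hVC]
  have hKX₂ : K * X₂ = fromCols Bᵀ 0 := by
    rw [hX₂def, Matrix.mul_fromCols, Matrix.mul_zero, cK]
  have hTRN : fromCols (F * (K⁻¹ * Bᵀ)) Bᵀ * N₂ = fromCols Bᵀ 0 := by
    rw [hN₂def, Matrix.fromCols_mul_fromBlocks]
    simp
  have hBRN : fromCols (B * (K⁻¹ * Bᵀ)) (0 : Matrix (Fin m) (Fin m) ℝ) * N₂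
      = (0 : Matrix (Fin m) (Fin m ⊕ Fin m) ℝ) := by
    rw [hN₂def, Matrix.fromCols_mul_fromBlocks]
    simp [fromColumns_zero]
  have hEQ : fromBlocks K 0 0 (0 : Matrix (Fin m) (Fin m) ℝ) * Q₁
      = (fromBlocks F Bᵀ B 0 * Q₁) * D := by
    rw [hAQ, hDdef, hQ₁def]
    simp only [Matrix.fromBlocks_multiply]
    simp only [Matrix.zero_mul, Matrix.mul_zero, add_zero, zero_add]
    rw [hKVC, hKX₂, hTRN, hBRN]
  -- equivalences
  let f : Fin (2 * m) ≃ (Fin m ⊕ Fin m) := (finCongr (two_mul m)).trans finSumFinEquiv.symm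
  let g : (Fin k ⊕ Fin (2 * m)) ≃ (Fin k ⊕ (Fin m ⊕ Fin m)) :=
    Equiv.sumCongr (Equiv.refl _) f
  let h1 : (Fin k ⊕ Fin m) ≃ Fin n := finSumFinEquiv.trans (finCongr hk)
  let es : (Fin k ⊕ (Fin m ⊕ Fin m)) ≃ (Fin n ⊕ Fin m) :=
    (Equiv.sumAssoc _ _ _).symm.trans (Equiv.sumCongr h1 (Equiv.refl _))
  let u : (Fin k ⊕ Fin (2 * m)) ≃ (Fin n ⊕ Fin m) := g.trans es
  -- squares
  set Qs : Matrix (Fin n ⊕ Fin m) (Fin n ⊕ Fin m) ℝ := Q₁.submatrix id ⇑es.symm with hQsdef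
  set Y : Matrix (Fin n ⊕ Fin m) (Fin k ⊕ (Fin m ⊕ Fin m)) ℝ :=
    fromBlocks F Bᵀ B 0 * Q₁ with hYdef
  set Ys : Matrix (Fin n ⊕ Fin m) (Fin n ⊕ Fin m) ℝ := Y.submatrix id ⇑es.symm with hYsdef
  -- kernel of Q₁
  have hQ₁ker : ∀ w : (Fin k ⊕ (Fin m ⊕ Fin m)) → ℝ, Q₁ *ᵥ w = 0 → w = 0 := by
    intro w hw
    set a : Fin k → ℝ := w ∘ Sum.inl with hadef
    set p : Fin m → ℝ := w ∘ Sum.inr ∘ Sum.inl with hpdef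
    set y : Fin m → ℝ := w ∘ Sum.inr ∘ Sum.inr with hydef
    have hw2 : Q₁ *ᵥ (Sum.elim a (Sum.elim p y)) = 0 := by
      rw [show Sum.elim a (Sum.elim p y) = w by
        funext s; rcases s with i | (i | i) <;> rfl]
      exact hw
    rw [hQ₁def, Matrix.fromBlocks_mulVec] at hw2
    simp only [Sum.elim_comp_inl, Sum.elim_comp_inr] at hw2
    rw [hX₂def, hX₄def] at hw2
    simp only [Matrix.fromCols_mulVec_sumElim, Matrix.zero_mulVec, Matrix.one_mulVec,
      zero_add, add_zero] at hw2
    have htop : (G₁ * V) *ᵥ a + (K⁻¹ * Bᵀ) *ᵥ p = 0 := by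
      ext i; exact congrFun hw2 (Sum.inl i)
    have hbot : (G₂ * V) *ᵥ a + y = 0 := by
      ext i; exact congrFun hw2 (Sum.inr i)
    have hBtop : (B * (K⁻¹ * Bᵀ)) *ᵥ p = 0 := by
      have h3 := congrArg (fun v => B *ᵥ v) htop
      simpa [Matrix.mulVec_add, Matrix.mulVec_mulVec, hBG1V, Matrix.zero_mulVec,
        Matrix.mulVec_zero] using h3
    have hp0 : p = 0 := hBKB p hBtop
    rw [hp0, Matrix.mulVec_zero, add_zero] at htop
    have ha0 : a = 0 := by
      apply hVinj
      apply hL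
      · rw [Matrix.mulVec_mulVec, hBV, Matrix.zero_mulVec]
      · rw [Matrix.mulVec_mulVec]
        exact htop
    have hy0 : y = 0 := by
      rw [ha0, Matrix.mulVec_zero, zero_add] at hbot
      exact hbot
    funext s
    rcases s with i | (i | i)
    · exact congrFun ha0 i
    · exact congrFun hp0 i
    · exact congrFun hy0 i
  have hQsU : IsUnit Qs := by
    apply Matrix.mulVec_injective_iff_isUnit.mp
    apply mulVec_inj_of_ker
    intro v hv
    rw [hQsdef, Matrix.submatrix_mulVec_equiv] at hv
    have h0 : Q₁ *ᵥ (v ∘ ⇑es) = 0 := by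
      funext s
      have := congrFun hv s
      simpa using this
    have h1 := hQ₁ker _ h0
    funext x
    have := congrFun h1 (es.symm x)
    simpa using this
  have hQs1 : Qs * Qs⁻¹ = 1 :=
    Matrix.mul_nonsing_inv Qs ((Matrix.isUnit_iff_isUnit_det _).mp hQsU)
  -- kernel of Y
  have hYker : ∀ w : (Fin k ⊕ (Fin m ⊕ Fin m)) → ℝ, Y *ᵥ w = 0 → w = 0 := by
    intro w hw
    set a : Fin k → ℝ := w ∘ Sum.inl with hadef
    set p : Fin m → ℝ := w ∘ Sum.inr ∘ Sum.inl with hpdef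
    set y : Fin m → ℝ := w ∘ Sum.inr ∘ Sum.inr with hydef
    have hw2 : Y *ᵥ (Sum.elim a (Sum.elim p y)) = 0 := by
      rw [show Sum.elim a (Sum.elim p y) = w by
        funext s; rcases s with i | (i | i) <;> rfl]
      exact hw
    rw [hAQ, Matrix.fromBlocks_mulVec] at hw2
    simp only [Sum.elim_comp_inl, Sum.elim_comp_inr] at hw2
    simp only [Matrix.fromCols_mulVec_sumElim, Matrix.zero_mulVec, Matrix.one_mulVec,
      zero_add, add_zero] at hw2
    have htop : (K * V) *ᵥ a + ((F * (K⁻¹ * Bᵀ)) *ᵥ p + Bᵀ *ᵥ y) = 0 := by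
      ext i; exact congrFun hw2 (Sum.inl i)
    have hbot : (B * (K⁻¹ * Bᵀ)) *ᵥ p = 0 := by
      ext i
      have := congrFun hw2 (Sum.inr i)
      simpa using this
    have hp0 : p = 0 := hBKB p hbot
    rw [hp0, Matrix.mulVec_zero, zero_add] at htop
    -- now (K*V) *ᵥ a + Bᵀ *ᵥ y = 0 ; dot with V *ᵥ a
    have hVa : V *ᵥ a = 0 := by
      by_contra hVa
      have hq := hK.dotProduct_mulVec_pos hVa
      rw [star_trivial] at hq
      have hdot : (V *ᵥ a) ⬝ᵥ ((K * V) *ᵥ a + Bᵀ *ᵥ y) = (V *ᵥ a) ⬝ᵥ (K *ᵥ (V *ᵥ a)) := by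
        rw [dotProduct_add]
        have hz : (V *ᵥ a) ⬝ᵥ (Bᵀ *ᵥ y) = 0 := by
          rw [Matrix.dotProduct_mulVec, Matrix.vecMul_transpose, Matrix.mulVec_mulVec, hBV,
            Matrix.zero_mulVec, zero_dotProduct]
        rw [hz, add_zero, Matrix.mulVec_mulVec]
      rw [htop, dotProduct_zero] at hdot
      rw [← hdot] at hq
      exact lt_irrefl 0 hq
    have ha0 : a = 0 := hVinj a hVa
    have hy0 : y = 0 := by
      rw [ha0, Matrix.mulVec_zero, zero_add] at htop
      exact hBt y htop
    funext s
    rcases s with i | (i | i)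
    · exact congrFun ha0 i
    · exact congrFun hp0 i
    · exact congrFun hy0 i
  have hYsU : IsUnit Ys := by
    apply Matrix.mulVec_injective_iff_isUnit.mp
    apply mulVec_inj_of_ker
    intro v hv
    rw [hYsdef, Matrix.submatrix_mulVec_equiv] at hv
    have h0 : Y *ᵥ (v ∘ ⇑es) = 0 := by
      funext s
      have := congrFun hv s
      simpa using this
    have h1 := hYker _ h0
    funext x
    have := congrFun h1 (es.symm x)
    simpa using this
  have hYsd : IsUnit Ys.det := (Matrix.isUnit_iff_isUnit_det _).mp hYsU
  have hYs1 : Ys * Ys⁻¹ = 1 := Matrix.mul_nonsing_inv Ys hYsd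
  have hYs2 : Ys⁻¹ * Ys = 1 := Matrix.nonsing_inv_mul Ys hYsd
  -- relations between square forms
  have hQ₁s : Q₁ = Qs.submatrix id ⇑es := by
    rw [hQsdef]
    ext i s
    simp
  have hYss : Y = Ys.submatrix id ⇑es := by
    rw [hYsdef]
    ext i s
    simp
  -- T1s and Ds
  set T1s : Matrix (Fin n ⊕ Fin m) (Fin n ⊕ Fin m) ℝ :=
    (fromBlocks C⁻¹ 0 0 (1 : Matrix (Fin m ⊕ Fin m) (Fin m ⊕ Fin m) ℝ)).submatrix
      ⇑es.symm ⇑es.symm with hT1sdef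
  set T1si : Matrix (Fin n ⊕ Fin m) (Fin n ⊕ Fin m) ℝ :=
    (fromBlocks C 0 0 (1 : Matrix (Fin m ⊕ Fin m) (Fin m ⊕ Fin m) ℝ)).submatrix
      ⇑es.symm ⇑es.symm with hT1sidef
  set Ds : Matrix (Fin n ⊕ Fin m) (Fin n ⊕ Fin m) ℝ := D.submatrix ⇑es.symm ⇑es.symm with hDsdef
  have hT1T1i : T1s * T1si = 1 := by
    rw [hT1sdef, hT1sidef, Matrix.submatrix_mul_equiv, Matrix.fromBlocks_multiply]
    simp only [Matrix.zero_mul, Matrix.mul_zero, add_zero, zero_add, Matrix.one_mul, hC2]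
    rw [Matrix.fromBlocks_one, Matrix.submatrix_one_equiv]
  have hT1iT1 : T1si * T1s = 1 := by
    rw [hT1sidef, hT1sdef, Matrix.submatrix_mul_equiv, Matrix.fromBlocks_multiply]
    simp only [Matrix.zero_mul, Matrix.mul_zero, add_zero, zero_add, Matrix.one_mul, hC1]
    rw [Matrix.fromBlocks_one, Matrix.submatrix_one_equiv]
  set Ps : Matrix (Fin n ⊕ Fin m) (Fin n ⊕ Fin m) ℝ := T1s * Ys⁻¹ with hPsdef
  set Psi : Matrix (Fin n ⊕ Fin m) (Fin n ⊕ Fin m) ℝ := Ys * T1si with hPsidef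
  have hPPi : Ps * Psi = 1 := by
    rw [hPsdef, hPsidef, Matrix.mul_assoc, ← Matrix.mul_assoc Ys⁻¹, hYs2, Matrix.one_mul,
      hT1T1i]
  -- main products
  have hAQs : fromBlocks F Bᵀ B 0 * Qs = Ys := by
    rw [hQsdef, mul_submatrix_right, hYsdef, hYdef]
  have hEQs : fromBlocks K 0 0 (0 : Matrix (Fin m) (Fin m) ℝ) * Qs = Ys * Ds := by
    rw [hQsdef, mul_submatrix_right, hEQ, hYsdef, hDsdef, Matrix.submatrix_mul_equiv]
  have hPsA : Ps * (fromBlocks F Bᵀ B 0 * Qs) = T1s := by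
    rw [hAQs, hPsdef, Matrix.mul_assoc, hYs2, Matrix.mul_one]
  have hPsE : Ps * (fromBlocks K 0 0 (0 : Matrix (Fin m) (Fin m) ℝ) * Qs) = T1s * Ds := by
    rw [hEQs, hPsdef, Matrix.mul_assoc, ← Matrix.mul_assoc Ys⁻¹, hYs2, Matrix.one_mul]
  have hT1D : T1s * Ds = (fromBlocks 1 0 0 N₂).submatrix ⇑es.symm ⇑es.symm := by
    rw [hT1sdef, hDsdef, hDdef, Matrix.submatrix_mul_equiv, Matrix.fromBlocks_multiply]
    simp only [Matrix.zero_mul, Matrix.mul_zero, add_zero, zero_add, Matrix.one_mul, hC2]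
  -- final data
  set N : Matrix (Fin (2 * m)) (Fin (2 * m)) ℝ := N₂.submatrix ⇑f ⇑f with hNdef
  have hgu : ∀ x, es.symm (u x) = g x := by
    intro x
    simp [u]
  have hblock : ∀ (W : Matrix (Fin k) (Fin k) ℝ)
      (Z : Matrix (Fin m ⊕ Fin m) (Fin m ⊕ Fin m) ℝ),
      (fromBlocks W 0 0 Z).submatrix ⇑g ⇑g = fromBlocks W 0 0 (Z.submatrix ⇑f ⇑f) := by
    intro W Z
    ext (i | i) (j | j) <;> simp [g, Matrix.fromBlocks]
  refine ⟨u.symm, Ps.submatrix ⇑u ⇑u, Qs.submatrix ⇑u ⇑u, C⁻¹, N, ?_, ?_, ?_, ?_, ?_, ?_⟩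
  · -- IsUnit P
    have hinv : Ps.submatrix ⇑u ⇑u * Psi.submatrix ⇑u ⇑u = 1 := by
      rw [Matrix.submatrix_mul_equiv, hPPi, Matrix.submatrix_one_equiv]
    exact (Matrix.isUnit_iff_isUnit_det _).mpr (Matrix.isUnit_det_of_right_inverse hinv)
  · -- IsUnit Q
    have hinv : Qs.submatrix ⇑u ⇑u * Qs⁻¹.submatrix ⇑u ⇑u = 1 := by
      rw [Matrix.submatrix_mul_equiv, hQs1, Matrix.submatrix_one_equiv]
    exact (Matrix.isUnit_iff_isUnit_det _).mpr (Matrix.isUnit_det_of_right_inverse hinv)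
  · -- N ^ 2 = 0
    have hN₂sq : N₂ * N₂ = 0 := by
      rw [hN₂def, Matrix.fromBlocks_multiply]
      simp [Matrix.fromBlocks_zero]
    rw [pow_two, hNdef, Matrix.submatrix_mul_equiv, hN₂sq]
    simp
  · -- N ≠ 0
    intro hN0
    have h1 : N (f.symm (Sum.inr ⟨0, hm⟩)) (f.symm (Sum.inl ⟨0, hm⟩)) = 1 := by
      simp [hNdef, hN₂def, Matrix.fromBlocks, Matrix.one_apply]
    rw [hN0] at h1
    simp at h1
  · -- ℰ equation
    show Ps.submatrix ⇑u ⇑u *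
        (fromBlocks K 0 0 (0 : Matrix (Fin m) (Fin m) ℝ)).submatrix ⇑u.symm.symm ⇑u.symm.symm *
        Qs.submatrix ⇑u ⇑u = fromBlocks 1 0 0 N
    rw [Equiv.symm_symm, Matrix.submatrix_mul_equiv, Matrix.submatrix_mul_equiv,
      Matrix.mul_assoc, hPsE, hT1D, Matrix.submatrix_submatrix]
    rw [show (⇑es.symm ∘ ⇑u) = ⇑g from funext hgu]
    rw [hblock]
  · -- 𝒜 equation
    show Ps.submatrix ⇑u ⇑u *
        (fromBlocks F Bᵀ B 0).submatrix ⇑u.symm.symm ⇑u.symm.symm *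
        Qs.submatrix ⇑u ⇑u = fromBlocks C⁻¹ 0 0 1
    rw [Equiv.symm_symm, Matrix.submatrix_mul_equiv, Matrix.submatrix_mul_equiv,
      Matrix.mul_assoc, hPsA, hT1sdef, Matrix.submatrix_submatrix]
    rw [show (⇑es.symm ∘ ⇑u) = ⇑g from funext hgu]
    rw [hblock, Matrix.submatrix_one_equiv]

lemma transpose_mulVec_ker {n m : ℕ} (B : Matrix (Fin m) (Fin n) ℝ) (hB : B.rank = m) :
    ∀ p : Fin m → ℝ, Bᵀ *ᵥ p = 0 → p = 0 := by
  have hrt : Module.finrank ℝ (LinearMap.range (Bᵀ).mulVecLin) = m := by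
    have := Matrix.rank_transpose B
    rw [hB] at this
    exact this
  have h1 := LinearMap.finrank_range_add_finrank_ker (Bᵀ).mulVecLin
  rw [hrt, Module.finrank_fintype_fun_eq_card, Fintype.card_fin] at h1
  have hker : LinearMap.ker (Bᵀ).mulVecLin = ⊥ := Submodule.finrank_eq_zero.mp (by omega)
  intro p hp
  have hmem : p ∈ LinearMap.ker (Bᵀ).mulVecLin := by
    rw [LinearMap.mem_ker, Matrix.mulVecLin_apply]
    exact hp
  rw [hker] at hmem
  exact hmem

end ImexKroneckerAux

/-- The implicit-explicit Euler difference-algebraic equation for the semi-discrete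
Navier-Stokes equations has Kronecker index 2: for sufficiently small `τ` the pair
`(ℰ, 𝒜)` is equivalent (after reindexing into blocks of sizes `n - m` and `2m`, and via
invertible matrices `P`, `Q`) to the Kronecker form `([[I, 0], [0, N]], [[J, 0], [0, I]])`
with `N² = 0` and `N ≠ 0`. -/
theorem imex_euler_kronecker_index_two (n m : ℕ) (hm : 1 ≤ m) (hmn : m ≤ n)
    (M A : Matrix (Fin n) (Fin n) ℝ) (B : Matrix (Fin m) (Fin n) ℝ)
    (hM : M.PosDef) (hB : B.rank = m) :
    ∃ τ₀ : ℝ, 0 < τ₀ ∧ ∀ τ : ℝ, 0 < τ → τ < τ₀ →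
      ∃ (e : (Fin n ⊕ Fin m) ≃ (Fin (n - m) ⊕ Fin (2 * m)))
        (P Q : Matrix (Fin (n - m) ⊕ Fin (2 * m)) (Fin (n - m) ⊕ Fin (2 * m)) ℝ)
        (J : Matrix (Fin (n - m)) (Fin (n - m)) ℝ)
        (N : Matrix (Fin (2 * m)) (Fin (2 * m)) ℝ),
        IsUnit P ∧ IsUnit Q ∧ N ^ 2 = 0 ∧ N ≠ 0 ∧
        P * (reindex e e
            (fromBlocks ((1 / τ) • M) 0 0 (0 : Matrix (Fin m) (Fin m) ℝ))) * Q =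
          fromBlocks 1 0 0 N ∧
        P * (reindex e e (fromBlocks ((1 / τ) • M + A) Bᵀ B 0)) * Q =
          fromBlocks J 0 0 1 := by
  classical
  have hMd : M.det ≠ 0 := hM.det_pos.ne'
  have hBt : ∀ p : Fin m → ℝ, Bᵀ *ᵥ p = 0 → p = 0 := ImexKroneckerAux.transpose_mulVec_ker B hB
  have hMi : (M⁻¹).PosDef := hM.inv
  have hBMB : (B * (M⁻¹ * Bᵀ)).det ≠ 0 := by
    have hker := ImexKroneckerAux.bwb_ker B M⁻¹ hMi hBt
    have hinj : Function.Injective (B * (M⁻¹ * Bᵀ)).mulVec :=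
      ImexKroneckerAux.mulVec_inj_of_ker _ hker
    have hu := Matrix.mulVec_injective_iff_isUnit.mp hinj
    exact isUnit_iff_ne_zero.mp ((Matrix.isUnit_iff_isUnit_det _).mp hu)
  have hadjM : M.det • M⁻¹ = M.adjugate := by
    rw [Matrix.inv_def, Ring.inverse_eq_inv, smul_smul, mul_inv_cancel₀ hMd, one_smul]
  have hadj0 : (B * (M.adjugate * Bᵀ)).det ≠ 0 := by
    rw [← hadjM, Matrix.smul_mul, Matrix.mul_smul, Matrix.det_smul, Fintype.card_fin]
    exact mul_ne_zero (pow_ne_zero _ hMd) hBMB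
  have hqc : Continuous fun τ : ℝ =>
      (M + τ • A).det * (B * ((M + τ • A).adjugate * Bᵀ)).det := by
    have hMA : Continuous fun τ : ℝ => M + τ • A :=
      continuous_const.add (continuous_id.smul continuous_const)
    exact hMA.matrix_det.mul
      ((continuous_const.matrix_mul (hMA.matrix_adjugate.matrix_mul continuous_const)).matrix_det)
  have hq0 : (M + (0 : ℝ) • A).det * (B * ((M + (0 : ℝ) • A).adjugate * Bᵀ)).det ≠ 0 := by
    rw [zero_smul, add_zero]
    exact mul_ne_zero hMd hadj0
  have hev : ∀ᶠ τ in nhds (0 : ℝ),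
      (M + τ • A).det * (B * ((M + τ • A).adjugate * Bᵀ)).det ≠ 0 :=
    (hqc.continuousAt).eventually_ne hq0
  obtain ⟨ε, hε, hball⟩ := Metric.eventually_nhds_iff.mp hev
  refine ⟨ε, hε, ?_⟩
  intro τ hτ hτε
  have hτ' : τ ≠ 0 := hτ.ne'
  have hqτ : (M + τ • A).det * (B * ((M + τ • A).adjugate * Bᵀ)).det ≠ 0 := by
    apply hball
    simpa [Real.dist_eq, abs_of_pos hτ] using hτε
  have hφ : (M + τ • A).det ≠ 0 := fun h => hqτ (by rw [h, zero_mul])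
  have hψ : (B * ((M + τ • A).adjugate * Bᵀ)).det ≠ 0 := fun h => hqτ (by rw [h, mul_zero])
  have hXd : IsUnit (M + τ • A).det := isUnit_iff_ne_zero.mpr hφ
  have hFeq : (1 / τ) • M + A = (1 / τ) • (M + τ • A) := by
    rw [smul_add, smul_smul, one_div, inv_mul_cancel₀ hτ', one_smul]
  have hFu : IsUnit ((1 / τ) • M + A) := by
    rw [Matrix.isUnit_iff_isUnit_det, hFeq, Matrix.det_smul, Fintype.card_fin]
    exact isUnit_iff_ne_zero.mpr
      (mul_ne_zero (pow_ne_zero _ (by positivity)) hφ)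
  have hFinv : ((1 / τ) • M + A)⁻¹ = τ • (M + τ • A)⁻¹ := by
    apply Matrix.inv_eq_right_inv
    rw [hFeq, Matrix.smul_mul, Matrix.mul_smul, Matrix.mul_nonsing_inv _ hXd, smul_smul,
      one_div, inv_mul_cancel₀ hτ', one_smul]
  have hSval : B * (((1 / τ) • M + A)⁻¹ * Bᵀ)
      = (τ * Ring.inverse (M + τ • A).det) • (B * ((M + τ • A).adjugate * Bᵀ)) := by
    rw [hFinv, Matrix.inv_def, smul_smul, Matrix.smul_mul, Matrix.mul_smul]
  have hSu : IsUnit (B * (((1 / τ) • M + A)⁻¹ * Bᵀ)) := by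
    rw [Matrix.isUnit_iff_isUnit_det, hSval, Matrix.det_smul, Fintype.card_fin]
    refine isUnit_iff_ne_zero.mpr (mul_ne_zero (pow_ne_zero _ ?_) hψ)
    refine mul_ne_zero hτ' ?_
    rw [Ring.inverse_eq_inv]
    exact inv_ne_zero hφ
  have hKpd : ((1 / τ) • M).PosDef := by
    constructor
    · show ((1 / τ) • M)ᴴ = (1 / τ) • M
      rw [Matrix.conjTranspose_smul, star_trivial, hM.1.eq]
    · intro x hx
      exact (hM.smul (show (0 : ℝ) < 1 / τ by positivity)).2 hx
  obtain ⟨e, P, Q, J, N, hP, hQ, hN2, hNne, h1, h2⟩ :=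
    ImexKroneckerAux.aux n m (n - m) hm (by omega) ((1 / τ) • M) A B hKpd hBt hB hFu hSu
  refine ⟨e, P, Q, J, N, hP, hQ, hN2, hNne, ?_, ?_⟩
  · rw [Matrix.reindex_apply]
    exact h1
  · rw [Matrix.reindex_apply]
    exact h2
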